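/- For every base B, all formulas φ, ψ, χ, and each sign * ∈ {+,−}: if ⊩−_B φ∧ψ, ∅;φ ⊩*_B χ and ∅;ψ ⊩*_B χ, then ⊩*_B χ. -/
import Mathlib


/-- Signs: `pos` for proof/assertion, `neg` for refutation/rejection. -/
inductive Sign where
  | pos
  | neg
deriving DecidableEq

/-- The dual of a sign. -/
def Sign.dual : Sign → Sign
  | .pos => .neg
  | .neg => .pos

/-- Formulas of the bilateral logic 2Int. -/
inductive Form where
  | atom : ℕ → Form
  | bot : Form
  | top : Form
  | and : Form → Form → Form
  | or : Form → Form → Form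
  | imp : Form → Form → Form
  | coimp : Form → Form → Form
deriving DecidableEq

/-- A premise of an atomic rule: the sign required (proof or refutation), the premise atom,
and the sets of dischargeable atomic proof assumptions and refutation assumptions. -/
structure Premise where
  sign : Sign
  concl : ℕ
  dischargePf : Set ℕ
  dischargeRf : Set ℕ

/-- An atomic rule: a list of premises, a marking as proof (`pos`) or refutation (`neg`) rule,
and an atomic conclusion. -/
structure AtomicRule where
  prems : List Premise
  sign : Sign
  concl : ℕ

/-- A bilateral atomic system (base) is a set of atomic rules. -/
abbrev Base := Set AtomicRule

/-- `AtDeriv B s Γ Δ p` formalizes `Γ;Δ ⊢^s_B p`: there is a deduction in `B` of the atom `p`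
whose open atomic proof assumptions are contained in `Γ` and open atomic refutation
assumptions in `Δ`, consisting of a single assumption of sign `s` or ending with a rule of
sign `s`. -/
inductive AtDeriv (B : Base) : Sign → Set ℕ → Set ℕ → ℕ → Prop
  | hypPos {Γ Δ : Set ℕ} {p : ℕ} : p ∈ Γ → AtDeriv B .pos Γ Δ p
  | hypNeg {Γ Δ : Set ℕ} {p : ℕ} : p ∈ Δ → AtDeriv B .neg Γ Δ p
  | app {Γ Δ : Set ℕ} {R : AtomicRule} (hR : R ∈ B)
      (h : ∀ pr ∈ R.prems,
        AtDeriv B pr.sign (Γ ∪ pr.dischargePf) (Δ ∪ pr.dischargeRf) pr.concl) :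
      AtDeriv B R.sign Γ Δ R.concl

/-- Bilateral validity (support) `⊩^s_B φ`, by recursion on the formula. -/
def Supp : Form → Base → Sign → Prop
  | .atom p, B, s => AtDeriv B s ∅ ∅ p
  | .bot, B, .pos => ∀ p : ℕ, AtDeriv B .pos ∅ ∅ p ∧ AtDeriv B .neg ∅ ∅ p
  | .bot, _, .neg => True
  | .top, _, .pos => True
  | .top, B, .neg => ∀ p : ℕ, AtDeriv B .pos ∅ ∅ p ∧ AtDeriv B .neg ∅ ∅ p
  | .and φ ψ, B, .pos => Supp φ B .pos ∧ Supp ψ B .pos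
  | .and φ ψ, B, .neg => ∀ C : Base, B ⊆ C → ∀ p : ℕ,
      (((∀ D : Base, C ⊆ D → Supp φ D .neg → AtDeriv D .pos ∅ ∅ p) ∧
        (∀ D : Base, C ⊆ D → Supp ψ D .neg → AtDeriv D .pos ∅ ∅ p)) →
        AtDeriv C .pos ∅ ∅ p) ∧
      (((∀ D : Base, C ⊆ D → Supp φ D .neg → AtDeriv D .neg ∅ ∅ p) ∧
        (∀ D : Base, C ⊆ D → Supp ψ D .neg → AtDeriv D .neg ∅ ∅ p)) →
        AtDeriv C .neg ∅ ∅ p)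
  | .or φ ψ, B, .pos => ∀ C : Base, B ⊆ C → ∀ p : ℕ,
      (((∀ D : Base, C ⊆ D → Supp φ D .pos → AtDeriv D .pos ∅ ∅ p) ∧
        (∀ D : Base, C ⊆ D → Supp ψ D .pos → AtDeriv D .pos ∅ ∅ p)) →
        AtDeriv C .pos ∅ ∅ p) ∧
      (((∀ D : Base, C ⊆ D → Supp φ D .pos → AtDeriv D .neg ∅ ∅ p) ∧
        (∀ D : Base, C ⊆ D → Supp ψ D .pos → AtDeriv D .neg ∅ ∅ p)) →
        AtDeriv C .neg ∅ ∅ p)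
  | .or φ ψ, B, .neg => Supp φ B .neg ∧ Supp ψ B .neg
  | .imp φ ψ, B, .pos => ∀ C : Base, B ⊆ C → Supp φ C .pos → Supp ψ C .pos
  | .imp φ ψ, B, .neg => Supp φ B .pos ∧ Supp ψ B .neg
  | .coimp φ ψ, B, .pos => Supp φ B .pos ∧ Supp ψ B .neg
  | .coimp φ ψ, B, .neg => ∀ C : Base, B ⊆ C → Supp ψ C .neg → Supp φ C .neg

open Classical in
/-- `Cons B Γ Δ s χ` formalizes `Γ;Δ ⊩^s_B χ`. -/
def Cons (B : Base) (Γ Δ : Set Form) (s : Sign) (χ : Form) : Prop :=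
  if Γ = ∅ ∧ Δ = ∅ then Supp χ B s
  else ∀ C : Base, B ⊆ C →
    (∀ φ ∈ Γ, Supp φ C .pos) → (∀ ψ ∈ Δ, Supp ψ C .neg) → Supp χ C s


lemma AtDeriv.mono {B C : Base} (hBC : B ⊆ C) {s : Sign} {Γ Δ : Set ℕ} {p : ℕ}
    (h : AtDeriv B s Γ Δ p) : AtDeriv C s Γ Δ p := by
  induction h with
  | hypPos h => exact .hypPos h
  | hypNeg h => exact .hypNeg h
  | app hR h ih => exact .app (hBC hR) ih

lemma Supp_mono : ∀ (χ : Form) (B C : Base) (s : Sign), B ⊆ C → Supp χ B s → Supp χ C s := by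
  intro χ
  induction χ with
  | atom p =>
    intro B C s h hs; exact AtDeriv.mono h hs
  | bot =>
    intro B C s h hs
    cases s with
    | pos => exact fun p => ⟨AtDeriv.mono h (hs p).1, AtDeriv.mono h (hs p).2⟩
    | neg => trivial
  | top =>
    intro B C s h hs
    cases s with
    | pos => trivial
    | neg => exact fun p => ⟨AtDeriv.mono h (hs p).1, AtDeriv.mono h (hs p).2⟩
  | and φ ψ ihφ ihψ =>
    intro B C s h hs
    cases s with
    | pos => exact ⟨ihφ _ _ _ h hs.1, ihψ _ _ _ h hs.2⟩
    | neg => exact fun D hD => hs D (h.trans hD)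
  | or φ ψ ihφ ihψ =>
    intro B C s h hs
    cases s with
    | pos => exact fun D hD => hs D (h.trans hD)
    | neg => exact ⟨ihφ _ _ _ h hs.1, ihψ _ _ _ h hs.2⟩
  | imp φ ψ ihφ ihψ =>
    intro B C s h hs
    cases s with
    | pos => exact fun D hD => hs D (h.trans hD)
    | neg => exact ⟨ihφ _ _ _ h hs.1, ihψ _ _ _ h hs.2⟩
  | coimp φ ψ ihφ ihψ =>
    intro B C s h hs
    cases s with
    | pos => exact ⟨ihφ _ _ _ h hs.1, ihψ _ _ _ h hs.2⟩
    | neg => exact fun D hD => hs D (h.trans hD)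

lemma conj_main (φ ψ : Form) :
    ∀ (χ : Form) (B : Base) (s : Sign),
      Supp (φ.and ψ) B .neg →
      (∀ C, B ⊆ C → Supp φ C .neg → Supp χ C s) →
      (∀ C, B ⊆ C → Supp ψ C .neg → Supp χ C s) →
      Supp χ B s := by
  intro χ
  induction χ with
  | atom p =>
    intro B s hand h1 h2
    cases s with
    | pos => exact (hand B (subset_refl B) p).1 ⟨h1, h2⟩
    | neg => exact (hand B (subset_refl B) p).2 ⟨h1, h2⟩
  | bot =>
    intro B s hand h1 h2
    cases s with
    | pos =>
      intro p
      refine ⟨(hand B (subset_refl B) p).1 ⟨?_, ?_⟩, (hand B (subset_refl B) p).2 ⟨?_, ?_⟩⟩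
      · exact fun D hD hφ => (h1 D hD hφ p).1
      · exact fun D hD hψ => (h2 D hD hψ p).1
      · exact fun D hD hφ => (h1 D hD hφ p).2
      · exact fun D hD hψ => (h2 D hD hψ p).2
    | neg => trivial
  | top =>
    intro B s hand h1 h2
    cases s with
    | pos => trivial
    | neg =>
      intro p
      refine ⟨(hand B (subset_refl B) p).1 ⟨?_, ?_⟩, (hand B (subset_refl B) p).2 ⟨?_, ?_⟩⟩
      · exact fun D hD hφ => (h1 D hD hφ p).1
      · exact fun D hD hψ => (h2 D hD hψ p).1
      · exact fun D hD hφ => (h1 D hD hφ p).2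
      · exact fun D hD hψ => (h2 D hD hψ p).2
  | and χ₁ χ₂ ih1 ih2 =>
    intro B s hand h1 h2
    cases s with
    | pos =>
      exact ⟨ih1 B .pos hand (fun C hC hφ => (h1 C hC hφ).1) (fun C hC hψ => (h2 C hC hψ).1),
             ih2 B .pos hand (fun C hC hφ => (h1 C hC hφ).2) (fun C hC hψ => (h2 C hC hψ).2)⟩
    | neg =>
      intro C hC p
      constructor
      · intro hpr
        refine (hand C hC p).1 ⟨?_, ?_⟩
        · exact fun D hD hφ => (h1 D (hC.trans hD) hφ D (subset_refl D) p).1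
            ⟨fun E hE h' => hpr.1 E (hD.trans hE) h', fun E hE h' => hpr.2 E (hD.trans hE) h'⟩
        · exact fun D hD hψ => (h2 D (hC.trans hD) hψ D (subset_refl D) p).1
            ⟨fun E hE h' => hpr.1 E (hD.trans hE) h', fun E hE h' => hpr.2 E (hD.trans hE) h'⟩
      · intro hpr
        refine (hand C hC p).2 ⟨?_, ?_⟩
        · exact fun D hD hφ => (h1 D (hC.trans hD) hφ D (subset_refl D) p).2
            ⟨fun E hE h' => hpr.1 E (hD.trans hE) h', fun E hE h' => hpr.2 E (hD.trans hE) h'⟩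
        · exact fun D hD hψ => (h2 D (hC.trans hD) hψ D (subset_refl D) p).2
            ⟨fun E hE h' => hpr.1 E (hD.trans hE) h', fun E hE h' => hpr.2 E (hD.trans hE) h'⟩
  | or χ₁ χ₂ ih1 ih2 =>
    intro B s hand h1 h2
    cases s with
    | pos =>
      intro C hC p
      constructor
      · intro hpr
        refine (hand C hC p).1 ⟨?_, ?_⟩
        · exact fun D hD hφ => (h1 D (hC.trans hD) hφ D (subset_refl D) p).1
            ⟨fun E hE h' => hpr.1 E (hD.trans hE) h', fun E hE h' => hpr.2 E (hD.trans hE) h'⟩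
        · exact fun D hD hψ => (h2 D (hC.trans hD) hψ D (subset_refl D) p).1
            ⟨fun E hE h' => hpr.1 E (hD.trans hE) h', fun E hE h' => hpr.2 E (hD.trans hE) h'⟩
      · intro hpr
        refine (hand C hC p).2 ⟨?_, ?_⟩
        · exact fun D hD hφ => (h1 D (hC.trans hD) hφ D (subset_refl D) p).2
            ⟨fun E hE h' => hpr.1 E (hD.trans hE) h', fun E hE h' => hpr.2 E (hD.trans hE) h'⟩
        · exact fun D hD hψ => (h2 D (hC.trans hD) hψ D (subset_refl D) p).2
            ⟨fun E hE h' => hpr.1 E (hD.trans hE) h', fun E hE h' => hpr.2 E (hD.trans hE) h'⟩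
    | neg =>
      exact ⟨ih1 B .neg hand (fun C hC hφ => (h1 C hC hφ).1) (fun C hC hψ => (h2 C hC hψ).1),
             ih2 B .neg hand (fun C hC hφ => (h1 C hC hφ).2) (fun C hC hψ => (h2 C hC hψ).2)⟩
  | imp χ₁ χ₂ ih1 ih2 =>
    intro B s hand h1 h2
    cases s with
    | pos =>
      intro C hC hχ1
      refine ih2 C .pos (Supp_mono _ B C .neg hC hand) ?_ ?_
      · exact fun D hD hφ => h1 D (hC.trans hD) hφ D (subset_refl D)
          (Supp_mono χ₁ C D .pos hD hχ1)
      · exact fun D hD hψ => h2 D (hC.trans hD) hψ D (subset_refl D)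
          (Supp_mono χ₁ C D .pos hD hχ1)
    | neg =>
      exact ⟨ih1 B .pos hand (fun C hC hφ => (h1 C hC hφ).1) (fun C hC hψ => (h2 C hC hψ).1),
             ih2 B .neg hand (fun C hC hφ => (h1 C hC hφ).2) (fun C hC hψ => (h2 C hC hψ).2)⟩
  | coimp χ₁ χ₂ ih1 ih2 =>
    intro B s hand h1 h2
    cases s with
    | pos =>
      exact ⟨ih1 B .pos hand (fun C hC hφ => (h1 C hC hφ).1) (fun C hC hψ => (h2 C hC hψ).1),
             ih2 B .neg hand (fun C hC hφ => (h1 C hC hφ).2) (fun C hC hψ => (h2 C hC hψ).2)⟩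
    | neg =>
      intro C hC hχ2
      refine ih1 C .neg (Supp_mono _ B C .neg hC hand) ?_ ?_
      · exact fun D hD hφ => h1 D (hC.trans hD) hφ D (subset_refl D)
          (Supp_mono χ₂ C D .neg hD hχ2)
      · exact fun D hD hψ => h2 D (hC.trans hD) hψ D (subset_refl D)
          (Supp_mono χ₂ C D .neg hD hχ2)


theorem conjunction_general (B : Base) (φ ψ χ : Form) (s : Sign)
    (hand : Supp (φ.and ψ) B .neg)
    (h1 : Cons B ∅ {φ} s χ) (h2 : Cons B ∅ {ψ} s χ) :
    Supp χ B s := by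
  simp only [Cons, Set.empty_def] at h1 h2
  rw [if_neg (fun h => (Set.singleton_ne_empty φ) h.2)] at h1
  rw [if_neg (fun h => (Set.singleton_ne_empty ψ) h.2)] at h2
  refine conj_main φ ψ χ B s hand ?_ ?_
  · exact fun C hC hφ => h1 C hC (fun _ h => absurd h (Set.notMem_empty _))
      (fun x hx => by rwa [Set.mem_singleton_iff.mp hx])
  · exact fun C hC hψ => h2 C hC (fun _ h => absurd h (Set.notMem_empty _))
      (fun x hx => by rwa [Set.mem_singleton_iff.mp hx])
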